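/- arXiv:1809.09286 — 3 statements merged into one kernel-verified Lean document; each statement's English description precedes it below -/
import Mathlib

section
/- Let p, m, n be natural numbers, and let f : ℤ^p → ℤ^m and g : ℤ^p → ℤ^n be group homomorphisms (equivalently ℤ-linear maps) such that the image of f is a direct summand of ℤ^m, the image of g is a direct summand of ℤ^n, and ker(f) ⊆ ker(g). Then the homomorphism h : ℤ^p → ℤ^m ⊕ ℤ^n defined by h(x) = (f(x), g(x)) has image which is a direct summand of ℤ^m ⊕ ℤ^n. -/
/-- If `f : ℤ^p → ℤ^m` and `g : ℤ^p → ℤ^n` are ℤ-linear maps whose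
images are direct summands and `ker f ⊆ ker g`, then `h = (f, g) : ℤ^p → ℤ^m ⊕ ℤ^n`
has image a direct summand of `ℤ^m ⊕ ℤ^n`. -/
theorem image_prod_isDirectSummand
    (p m n : ℕ)
    (f : (Fin p → ℤ) →ₗ[ℤ] (Fin m → ℤ))
    (g : (Fin p → ℤ) →ₗ[ℤ] (Fin n → ℤ))
    (hf : ∃ P : Submodule ℤ (Fin m → ℤ), IsCompl (LinearMap.range f) P)
    (hg : ∃ P : Submodule ℤ (Fin n → ℤ), IsCompl (LinearMap.range g) P)
    (hker : LinearMap.ker f ≤ LinearMap.ker g) :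
    ∃ Q : Submodule ℤ ((Fin m → ℤ) × (Fin n → ℤ)),
      IsCompl (LinearMap.range (f.prod g)) Q := by
  obtain ⟨P, hP⟩ := hf
  -- section of the corestriction of f
  obtain ⟨s, hs⟩ := Module.projective_lifting_property f.rangeRestrict LinearMap.id
    f.surjective_rangeRestrict
  -- projection onto range f
  set π := (LinearMap.range f).projectionOnto P hP with hπ
  -- U : ℤ^m → ℤ^n with U (f x) = g x
  set U : (Fin m → ℤ) →ₗ[ℤ] (Fin n → ℤ) := g ∘ₗ s ∘ₗ π with hU
  have hUf : ∀ x, U (f x) = g x := by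
    intro x
    have h1 : π (f x) = f.rangeRestrict x := by
      simpa using (LinearMap.range f).projectionOnto_apply_left (q := P) hP
        (f.rangeRestrict x)
    have h2 : f (s (f.rangeRestrict x)) = f x := by
      have := congrArg (fun t => ((t (f.rangeRestrict x) : ↥(LinearMap.range f)) :
        Fin m → ℤ)) hs
      simpa using this
    have h3 : s (f.rangeRestrict x) - x ∈ LinearMap.ker g := by
      apply hker
      simp [LinearMap.mem_ker, map_sub, h2]
    have h4 : g (s (f.rangeRestrict x)) = g x := by
      have := (LinearMap.mem_ker).mp h3
      rw [map_sub, sub_eq_zero] at this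
      exact this
    simp [hU, h1, h4]
  -- the shearing automorphism T (y, z) = (y, z - U y)
  let A : ((Fin m → ℤ) × (Fin n → ℤ)) →ₗ[ℤ] ((Fin m → ℤ) × (Fin n → ℤ)) :=
    (LinearMap.fst ℤ _ _).prod (LinearMap.snd ℤ _ _ - U ∘ₗ LinearMap.fst ℤ _ _)
  let B : ((Fin m → ℤ) × (Fin n → ℤ)) →ₗ[ℤ] ((Fin m → ℤ) × (Fin n → ℤ)) :=
    (LinearMap.fst ℤ _ _).prod (LinearMap.snd ℤ _ _ + U ∘ₗ LinearMap.fst ℤ _ _)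
  have hAB : A ∘ₗ B = LinearMap.id := by
    ext x <;> simp [A, B]
  have hBA : B ∘ₗ A = LinearMap.id := by
    ext x <;> simp [A, B]
  let T : ((Fin m → ℤ) × (Fin n → ℤ)) ≃ₗ[ℤ] ((Fin m → ℤ) × (Fin n → ℤ)) :=
    LinearEquiv.ofLinear A B hAB hBA
  -- T maps range (f.prod g) to (range f) × ⊥
  have hcomp : A ∘ₗ f.prod g = f.prod 0 := by
    ext x <;> simp [A, hUf]
  have key : ∀ x, T ((f x, g x) : (Fin m → ℤ) × (Fin n → ℤ)) = (f x, 0) := fun x =>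
    LinearMap.congr_fun hcomp x
  let e : Submodule ℤ ((Fin m → ℤ) × (Fin n → ℤ)) ≃o
      Submodule ℤ ((Fin m → ℤ) × (Fin n → ℤ)) := Submodule.orderIsoMapComap T
  have hmap : e (LinearMap.range (f.prod g)) = (LinearMap.range f).prod ⊥ := by
    show Submodule.map (T : ((Fin m → ℤ) × (Fin n → ℤ)) →ₗ[ℤ] ((Fin m → ℤ) × (Fin n → ℤ))) (LinearMap.range (f.prod g)) = (LinearMap.range f).prod ⊥
    ext ⟨y, z⟩
    simp only [Submodule.mem_map, LinearMap.mem_range, Submodule.mem_prod,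
      Submodule.mem_bot]
    constructor
    · rintro ⟨w, ⟨x, hx⟩, hw⟩
      subst hx
      rw [show (f.prod g) x = (f x, g x) from rfl] at hw
      rw [LinearEquiv.coe_coe, key x] at hw
      exact ⟨⟨x, congrArg Prod.fst hw⟩, (congrArg Prod.snd hw).symm⟩
    · rintro ⟨⟨x, hx⟩, hz⟩
      refine ⟨(f.prod g) x, ⟨x, rfl⟩, ?_⟩
      rw [show (f.prod g) x = (f x, g x) from rfl, LinearEquiv.coe_coe, key x, hx, hz]
  have hcompl : IsCompl ((LinearMap.range f).prod ⊥)
      (P.prod (⊤ : Submodule ℤ (Fin n → ℤ))) := by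
    constructor
    · rw [disjoint_iff, Submodule.prod_inf_prod, disjoint_iff.mp hP.disjoint,
        bot_inf_eq, Submodule.prod_bot]
    · rw [codisjoint_iff, Submodule.prod_sup_prod, codisjoint_iff.mp hP.codisjoint,
        bot_sup_eq, Submodule.prod_top]
  refine ⟨e.symm (P.prod ⊤), e.isCompl_iff.mpr ?_⟩
  rw [hmap, e.apply_symm_apply]
  exact hcompl
end

section
/- The ℤ-linear map T : ℤ⁶ → ℂ⁶ sending the j-th standard basis vector eⱼ to ξⱼ′ (for j = 1,…,6) has kernel exactly the cyclic subgroup ℤ·(e₃ − e₄). -/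
open Complex

/-- The images `ξ₁′, …, ξ₆′` of the generators of `K₀(A_θ ⋊ ℤ₂)` under `𝐓₄ ∘ ι⋆`. -/
noncomputable def ξ' (θ : ℝ) : Fin 6 → Fin 6 → ℂ :=
  ![![1, 0, 0, 0, 0, 0],
    ![1/2, 0, 0, 1/2, 0, 0],
    ![1/2, 0, 0, 0, 0, 1/2],
    ![1/2, 0, 0, 0, 0, 1/2],
    ![1/2, 0, 0, 0, 1/2, 0],
    ![(θ : ℂ)/2, 0, 0, 1/4, -(1/4), 0]]

/-- The ℤ-linear map `T : ℤ⁶ → ℂ⁶` sending the `j`-th standard basis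
vector to `ξⱼ′` has kernel exactly `ℤ·(e₃ - e₄)`. -/
theorem ker_T_eq_span (θ : ℝ) (hθ : Irrational θ)
    (T : (Fin 6 → ℤ) →ₗ[ℤ] (Fin 6 → ℂ))
    (hT : ∀ j : Fin 6, T (Pi.single j 1) = ξ' θ j) :
    LinearMap.ker T
      = Submodule.span ℤ {(Pi.single 2 1 - Pi.single 3 1 : Fin 6 → ℤ)} := by
  apply le_antisymm
  · intro n hn
    rw [LinearMap.mem_ker] at hn
    have hrep : n = ∑ i : Fin 6, n i • Pi.single i (1 : ℤ) := by
      ext k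
      simp [Finset.sum_apply, Pi.single_apply]
    have hn' : (∑ i : Fin 6, n i • ξ' θ i) = 0 := by
      have h2 : T (∑ i : Fin 6, n i • Pi.single i (1 : ℤ)) = ∑ i : Fin 6, n i • ξ' θ i := by
        rw [map_sum]
        simp_rw [map_smul, hT]
      rw [← h2, ← hrep]
      exact hn
    have hk : ∀ k : Fin 6, (n 0 : ℂ) * ξ' θ 0 k + (n 1 : ℂ) * ξ' θ 1 k
        + (n 2 : ℂ) * ξ' θ 2 k + (n 3 : ℂ) * ξ' θ 3 k + (n 4 : ℂ) * ξ' θ 4 k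
        + (n 5 : ℂ) * ξ' θ 5 k = 0 := by
      intro k
      have := congrFun hn' k
      simp only [Finset.sum_apply, Fin.sum_univ_six, Pi.smul_apply, zsmul_eq_mul,
        Pi.zero_apply] at this
      exact this
    have e0 : (n 0 : ℂ) * 1 + (n 1 : ℂ) * (1/2) + (n 2 : ℂ) * (1/2) + (n 3 : ℂ) * (1/2)
        + (n 4 : ℂ) * (1/2) + (n 5 : ℂ) * ((θ : ℂ)/2) = 0 := hk 0
    have e3 : (n 0 : ℂ) * 0 + (n 1 : ℂ) * (1/2) + (n 2 : ℂ) * 0 + (n 3 : ℂ) * 0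
        + (n 4 : ℂ) * 0 + (n 5 : ℂ) * (1/4) = 0 := hk 3
    have e4 : (n 0 : ℂ) * 0 + (n 1 : ℂ) * 0 + (n 2 : ℂ) * 0 + (n 3 : ℂ) * 0
        + (n 4 : ℂ) * (1/2) + (n 5 : ℂ) * (-(1/4)) = 0 := hk 4
    have e5 : (n 0 : ℂ) * 0 + (n 1 : ℂ) * 0 + (n 2 : ℂ) * (1/2) + (n 3 : ℂ) * (1/2)
        + (n 4 : ℂ) * 0 + (n 5 : ℂ) * 0 = 0 := hk 5
    have hn5 : n 5 = 0 := by
      by_contra hne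
      have hne' : ((n 5 : ℤ) : ℝ) ≠ 0 := by exact_mod_cast hne
      have hRc : (((n 0 : ℝ) * 1 + (n 1 : ℝ) * (1/2) + (n 2 : ℝ) * (1/2) + (n 3 : ℝ) * (1/2)
          + (n 4 : ℝ) * (1/2) + (n 5 : ℝ) * (θ/2) : ℝ) : ℂ) = ((0 : ℝ) : ℂ) := by
        push_cast
        linear_combination e0
      have hR := Complex.ofReal_injective hRc
      have hθeq : θ = ((-(2 * (n 0 : ℚ) + n 1 + n 2 + n 3 + n 4) / (n 5 : ℚ) : ℚ) : ℝ) := by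
        push_cast
        field_simp
        linarith
      rw [hθeq] at hθ
      exact Rat.not_irrational _ hθ
    have h1 : 2 * n 1 + n 5 = 0 := by
      have : ((2 * n 1 + n 5 : ℤ) : ℂ) = 0 := by push_cast; linear_combination 4 * e3
      exact_mod_cast this
    have h4 : 2 * n 4 - n 5 = 0 := by
      have : ((2 * n 4 - n 5 : ℤ) : ℂ) = 0 := by push_cast; linear_combination 4 * e4
      exact_mod_cast this
    have h5 : n 2 + n 3 = 0 := by
      have : ((n 2 + n 3 : ℤ) : ℂ) = 0 := by push_cast; linear_combination 2 * e5
      exact_mod_cast this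
    have h0 : 2 * n 0 + n 1 + n 2 + n 3 + n 4 = 0 := by
      have : ((2 * n 0 + n 1 + n 2 + n 3 + n 4 : ℤ) : ℂ) = 0 := by
        push_cast
        have hn5' : ((n 5 : ℤ) : ℂ) = 0 := by exact_mod_cast hn5
        linear_combination 2 * e0 - (θ : ℂ) * hn5'
      exact_mod_cast this
    have hn0 : n 0 = 0 := by omega
    have hn1 : n 1 = 0 := by omega
    have hn3 : n 3 = -n 2 := by omega
    have hn4 : n 4 = 0 := by omega
    rw [Submodule.mem_span_singleton]
    refine ⟨n 2, ?_⟩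
    ext k
    fin_cases k <;>
      simp [Pi.single_apply, hn0, hn1, hn3, hn4, hn5]
  · rw [Submodule.span_singleton_le_iff_mem, LinearMap.mem_ker, map_sub, hT, hT]
    show ξ' θ 2 - ξ' θ 3 = 0
    rw [sub_eq_zero]; rfl
end

section
/- The six vectors ξ₁, ξ₂, ξ₃, ξ₄, ξ₅, ξ₆ are ℤ-linearly independent in ℝ⁵ (so the ℤ-submodule of ℝ⁵ they generate is free of rank 6). -/
/-- The six basis vectors `ξ₁, …, ξ₆` of the range of the Chern–Connes
character `𝐓₂` (with `c = -1` if `0 < θ < 1/2` and `c = 1` if `1/2 < θ < 1`) are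
ℤ-linearly independent in ℝ⁵. -/
theorem xi_linearIndependent (θ : ℝ) (hθ : Irrational θ)
    (h0 : 0 < θ) (h1 : θ < 1) (c : ℝ)
    (hc₁ : θ < 1/2 → c = -1) (hc₂ : 1/2 < θ → c = 1) :
    LinearIndependent ℤ
      (![![1, 0, 0, 0, 0],
         ![1/2, 2, 0, 0, 0],
         ![1/2, 0, 2, 0, 0],
         ![1/2, 0, 0, 2, 0],
         ![1/2, 0, 0, 0, 2],
         ![θ/2, 1, c, -c, -1]] : Fin 6 → Fin 5 → ℝ) := by
  rw [Fintype.linearIndependent_iff]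
  intro g hg
  have e0 := congrFun hg 0
  have e1 := congrFun hg 1
  have e2 := congrFun hg 2
  have e3 := congrFun hg 3
  have e4 := congrFun hg 4
  simp [Fin.sum_univ_six, show (5 : Fin 6) = Fin.succ 4 from rfl, Matrix.cons_val_succ] at e0 e1 e2 e3 e4
  have h5 : g 5 = 0 := by
    by_contra h5
    apply hθ
    refine ⟨(-(2 * g 0 + g 1 + g 2 + g 3 + g 4) : ℤ) / (g 5 : ℤ), ?_⟩
    have hg5 : (g 5 : ℝ) ≠ 0 := Int.cast_ne_zero.mpr h5
    push_cast
    field_simp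
    linarith [e0]
  have h1' : g 1 = 0 := by
    have : (g 1 : ℝ) = 0 := by rw [h5] at e1; push_cast at e1 ⊢; linarith
    exact_mod_cast this
  have h2' : g 2 = 0 := by
    have : (g 2 : ℝ) = 0 := by rw [h5] at e2; push_cast at e2 ⊢; linarith
    exact_mod_cast this
  have h3' : g 3 = 0 := by
    have : (g 3 : ℝ) = 0 := by rw [h5] at e3; push_cast at e3 ⊢; linarith
    exact_mod_cast this
  have h4' : g 4 = 0 := by
    have : (g 4 : ℝ) = 0 := by rw [h5] at e4; push_cast at e4 ⊢; linarith
    exact_mod_cast this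
  have h0' : g 0 = 0 := by
    have : (g 0 : ℝ) = 0 := by
      rw [h5, h1', h2', h3', h4'] at e0; push_cast at e0 ⊢; linarith
    exact_mod_cast this
  intro i
  fin_cases i <;> assumption
end
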